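/- For sl_2, every monomial m appearing in the q-character χ_q(W_{k,a}) = m_{k,a}(1 + A_{aq^{2k-1}}^{-1}(1 + A_{aq^{2k-3}}^{-1}(1+···(1+A_{aq}^{-1})···))) with m ≠ m_{k,a} satisfies m ≤ m_{k,a} A_{aq^{2k-1}}^{-1}, i.e. m_{k,a} A_{aq^{2k-1}}^{-1} m^{-1} is a product of the monomials A_b; in particular m is right-negative and hence not dominant. -/

import Mathlib

noncomputable section

/-- Laurent monomials in the variables `Y_b`, `b ∈ ℂˣ`, written additively:
a monomial is its finitely supported exponent function. -/
abbrev Mon : Type := ℂˣ →₀ ℤ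

/-- The Laurent polynomial ring `ℤ[Y_b^±]`. -/
abbrev Rng : Type := AddMonoidAlgebra ℤ Mon

/-- The variable `Y_b` as a monomial. -/
def Y (b : ℂˣ) : Mon := Finsupp.single b 1

/-- A monomial viewed as an element of the Laurent polynomial ring. -/
def X (m : Mon) : Rng := AddMonoidAlgebra.single m 1

/-- The monomial `A_b = Y_{bq⁻¹} Y_{bq}` (sl₂ case). -/
def Amon (q b : ℂˣ) : Mon := Y (b * q⁻¹) + Y (b * q)

/-- The highest weight monomial `m_{k,a} = Y_a Y_{aq²} ⋯ Y_{aq^{2(k-1)}}`. -/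
def mka (q : ℂˣ) (k : ℕ) (a : ℂˣ) : Mon := ∑ s ∈ Finset.range k, Y (a * q ^ (2 * s))

/-- The normalized q-character of the sl₂ Kirillov-Reshetikhin module, given by the
nested formula `1 + A_{aq^{2k-1}}⁻¹(1 + A_{aq^{2k-3}}⁻¹(1 + ⋯ (1 + A_{aq}⁻¹)⋯))`. -/
def Nchi (q : ℂˣ) : ℕ → ℂˣ → Rng
  | 0, _ => 1
  | (k+1), a => 1 + X (-(Amon q (a * q ^ (2 * k + 1)))) * Nchi q k a

/-- The q-character `χ_q(W_{k,a}) = m_{k,a}(1 + A_{aq^{2k-1}}⁻¹(1 + ⋯ (1 + A_{aq}⁻¹)⋯))`. -/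
def chiW (q : ℂˣ) (k : ℕ) (a : ℂˣ) : Rng := X (mka q k a) * Nchi q k a

/-- A monomial `m ≠ 1` is right-negative if for each `a`, at the maximal `q`-power shift
`L` where `m` is supported on `a q^L`, the exponent is negative. -/
def RightNeg (q : ℂˣ) (m : Mon) : Prop :=
  m ≠ 0 ∧ ∀ (a : ℂˣ) (L : ℤ), m (a * q ^ L) ≠ 0 →
    (∀ l : ℤ, L < l → m (a * q ^ l) = 0) → m (a * q ^ L) < 0

/-- A monomial is dominant if all its exponents are nonnegative. -/
def Dominant (m : Mon) : Prop := ∀ b, 0 ≤ m b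

open Finset

lemma X_mul_X (m n : Mon) : X m * X n = X (m + n) := by
  simp [X, AddMonoidAlgebra.single_mul_single]

lemma X_zero : X (0 : Mon) = 1 := by
  simp [X, AddMonoidAlgebra.one_def]

lemma Nchi_eq (q : ℂˣ) (k : ℕ) (a : ℂˣ) :
    Nchi q k a = ∑ j ∈ Finset.range (k+1),
      X (-(∑ i ∈ Finset.Ico j k, Amon q (a * q ^ (2*i+1)))) := by
  induction k with
  | zero => simp [Nchi, X_zero]
  | succ k ih =>
    rw [Nchi, ih, Finset.mul_sum, Finset.sum_range_succ (n := k+1)]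
    simp only [Finset.Ico_self, Finset.sum_empty, neg_zero, X_zero]
    rw [add_comm (1 : Rng)]
    congr 1
    apply Finset.sum_congr rfl
    intro j hj
    rw [X_mul_X]
    congr 1
    rw [Finset.sum_Ico_succ_top (Nat.lt_succ_iff.mp (Finset.mem_range.mp hj))]
    abel

lemma Amon_eq (q a : ℂˣ) (i : ℕ) :
    Amon q (a * q ^ (2*i+1)) = Y (a * q ^ (2*i)) + Y (a * q ^ (2*(i+1))) := by
  unfold Amon
  congr 2
  · rw [pow_succ, mul_assoc, mul_assoc, mul_inv_cancel, mul_one]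
  · rw [mul_assoc, ← pow_succ, show 2*i+1+1 = 2*(i+1) from by omega]

lemma key (q a : ℂˣ) (k j : ℕ) (hj : j < k) :
    mka q k a - ∑ i ∈ Ico j k, Amon q (a * q ^ (2*i+1))
      = ∑ s ∈ range j, Y (a * q ^ (2*s)) - ∑ i ∈ Icc (j+1) k, Y (a * q ^ (2*i)) := by
  have h1 : ∑ i ∈ Ico j k, Amon q (a * q ^ (2*i+1))
      = ∑ i ∈ Ico j k, Y (a * q ^ (2*i)) + ∑ i ∈ Ico (j+1) (k+1), Y (a * q ^ (2*i)) := by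
    rw [Finset.sum_congr rfl (fun i _ => Amon_eq q a i), Finset.sum_add_distrib]
    congr 1
    rw [Finset.sum_Ico_eq_sum_range, Finset.sum_Ico_eq_sum_range]
    simp only [Nat.add_sub_add_right]
    apply Finset.sum_congr rfl
    intro i _
    rw [show j+i+1 = j+1+i from by omega]
  have h2 : mka q k a = ∑ s ∈ range j, Y (a * q ^ (2*s)) + ∑ i ∈ Ico j k, Y (a * q ^ (2*i)) := by
    rw [mka, range_eq_Ico, ← Finset.sum_Ico_consecutive _ (Nat.zero_le j) (le_of_lt hj), range_eq_Ico]
  rw [h1, h2, ← Finset.Ico_add_one_right_eq_Icc]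
  abel

section eval
variable {q : ℂˣ} (hq : ∀ n : ℤ, n ≠ 0 → q ^ n ≠ 1)

include hq

lemma qpow_inj {x y : ℤ} (h : q ^ x = q ^ y) : x = y := by
  by_contra hxy
  exact hq (x - y) (sub_ne_zero.mpr hxy) (by rw [zpow_sub, h]; exact mul_inv_cancel _)

lemma qpow_nat_inj {x y : ℕ} (h : q ^ x = q ^ y) : x = y := by
  have := qpow_inj hq (x := (x:ℤ)) (y := (y:ℤ)) (by rw [zpow_natCast, zpow_natCast, h])
  exact_mod_cast this

lemma point_inj {a : ℂˣ} {x y : ℕ} (h : a * q ^ x = a * q ^ y) : x = y :=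
  qpow_nat_inj hq (mul_left_cancel h)

lemma eval_neg (a : ℂˣ) (j k : ℕ) (hjk : j < k) :
    (∑ s ∈ range j, Y (a * q ^ (2*s)) - ∑ i ∈ Icc (j+1) k, Y (a * q ^ (2*i)))
      (a * q ^ (2*k)) = -1 := by
  rw [Finsupp.sub_apply, Finsupp.finset_sum_apply, Finsupp.finset_sum_apply]
  have h1 : ∑ s ∈ range j, (Y (a * q ^ (2*s))) (a * q ^ (2*k)) = 0 := by
    apply Finset.sum_eq_zero
    intro s hs
    rw [Y, Finsupp.single_apply, if_neg]
    intro h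
    have := point_inj hq h
    have := Finset.mem_range.mp hs
    omega
  have h2 : ∑ i ∈ Icc (j+1) k, (Y (a * q ^ (2*i))) (a * q ^ (2*k)) = 1 := by
    have : ∀ i ∈ Icc (j+1) k, (Y (a * q ^ (2*i))) (a * q ^ (2*k))
        = if i = k then 1 else 0 := by
      intro i _
      rw [Y, Finsupp.single_apply]
      congr 1
      simp only [eq_iff_iff]
      constructor
      · intro h; have := point_inj hq h; omega
      · rintro rfl; rfl
    rw [Finset.sum_congr rfl this, Finset.sum_ite_eq']
    simp [Finset.mem_Icc, hjk, Nat.succ_le_of_lt hjk]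
  rw [h1, h2]; rfl

omit hq in
lemma eval_pos (a : ℂˣ) (j k : ℕ) (c : ℂˣ)
    (h : 0 < (∑ s ∈ range j, Y (a * q ^ (2*s)) - ∑ i ∈ Icc (j+1) k, Y (a * q ^ (2*i))) c) :
    ∃ s < j, c = a * q ^ (2*s) := by
  rw [Finsupp.sub_apply, Finsupp.finset_sum_apply, Finsupp.finset_sum_apply] at h
  have h2 : 0 ≤ ∑ i ∈ Icc (j+1) k, (Y (a * q ^ (2*i))) c := by
    apply Finset.sum_nonneg
    intro i _
    rw [Y, Finsupp.single_apply]
    split <;> omega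
  have h1 : ∑ s ∈ range j, (Y (a * q ^ (2*s))) c ≠ 0 := by omega
  obtain ⟨s, hs, hne⟩ := Finset.exists_ne_zero_of_sum_ne_zero h1
  refine ⟨s, Finset.mem_range.mp hs, ?_⟩
  rw [Y, Finsupp.single_apply] at hne
  by_contra hc
  exact hne (if_neg (fun h' => hc h'.symm))

end eval

lemma support_chiW (q : ℂˣ) (k : ℕ) (a : ℂˣ) {m : Mon}
    (hm : m ∈ (chiW q k a).coeff.support) :
    ∃ j ≤ k, m = mka q k a - ∑ i ∈ Ico j k, Amon q (a * q ^ (2*i+1)) := by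
  rw [chiW, Nchi_eq, Finset.mul_sum] at hm
  have hm' : (∑ j ∈ range (k+1),
      X (mka q k a) * X (-(∑ i ∈ Ico j k, Amon q (a * q ^ (2*i+1))))).coeff m ≠ 0 :=
    Finsupp.mem_support_iff.mp hm
  rw [AddMonoidAlgebra.coeff_sum, Finsupp.finset_sum_apply] at hm'
  obtain ⟨j, hj, hne⟩ := Finset.exists_ne_zero_of_sum_ne_zero hm'
  refine ⟨j, Nat.lt_succ_iff.mp (Finset.mem_range.mp hj), ?_⟩
  rw [X_mul_X, X, AddMonoidAlgebra.coeff_single, Finsupp.single_apply] at hne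
  by_contra hc
  refine hne (if_neg (fun h' => hc ?_))
  rw [← h', sub_eq_add_neg]

/-- for sl₂, every monomial `m ≠ m_{k,a}` of `χ_q(W_{k,a})` satisfies
`m ≤ m_{k,a} A_{aq^{2k-1}}⁻¹` (i.e. `m_{k,a} A_{aq^{2k-1}}⁻¹ m⁻¹` is a product of `A_b`'s);
in particular `m` is right-negative and not dominant. -/
theorem kr_sl2_lower_monomials (q : ℂˣ) (hq : ∀ n : ℤ, n ≠ 0 → q ^ n ≠ 1)
    (k : ℕ) (hk : 1 ≤ k) (a : ℂˣ) :
    ∀ m ∈ (chiW q k a).coeff.support, m ≠ mka q k a →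
      (∃ s : Multiset ℂˣ,
        mka q k a - Amon q (a * q ^ (2 * (k : ℤ) - 1)) = m + (s.map (Amon q)).sum) ∧
      RightNeg q m ∧ ¬ Dominant m := by
  intro m hm hmne
  obtain ⟨j, hjle, rfl⟩ := support_chiW q k a hm
  have hjk : j < k := by
    rcases lt_or_eq_of_le hjle with h | rfl
    · exact h
    · exact absurd (by simp) hmne
  have hmval := key q a k j hjk
  -- the Amon argument with integer exponent equals the one with natural exponent
  have hA : Amon q (a * q ^ (2 * (k : ℤ) - 1)) = Amon q (a * q ^ (2*(k-1)+1)) := by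
    congr 2
    rw [← zpow_natCast q (2*(k-1)+1)]
    congr 1
    push_cast
    omega
  refine ⟨?_, ?_, ?_⟩
  · refine ⟨(Ico j (k-1)).val.map (fun i => a * q ^ (2*i+1)), ?_⟩
    have hsum : ((((Ico j (k-1)).val.map (fun i => a * q ^ (2*i+1))).map (Amon q))).sum
        = ∑ i ∈ Ico j (k-1), Amon q (a * q ^ (2*i+1)) := by
      rw [Multiset.map_map]; rfl
    rw [hsum, hA]
    have hsplit : ∑ i ∈ Ico j k, Amon q (a * q ^ (2*i+1))
        = ∑ i ∈ Ico j (k-1), Amon q (a * q ^ (2*i+1)) + Amon q (a * q ^ (2*(k-1)+1)) := by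
      conv_lhs => rw [show k = (k-1)+1 from by omega]
      rw [Finset.sum_Ico_succ_top (by omega)]
    rw [hsplit]
    abel
  · have hneg : (mka q k a - ∑ i ∈ Ico j k, Amon q (a * q ^ (2*i+1))) (a * q ^ (2*k)) = -1 := by
      rw [hmval]; exact eval_neg hq a j k hjk
    constructor
    · intro h0
      rw [h0] at hneg
      simp at hneg
    · intro a' L hL hmax
      by_contra hlt
      have hpos : 0 < (mka q k a - ∑ i ∈ Ico j k, Amon q (a * q ^ (2*i+1))) (a' * q ^ L) :=
        lt_of_le_of_ne (not_lt.mp hlt) (Ne.symm hL)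
      rw [hmval] at hpos
      obtain ⟨s, hsj, hc⟩ := eval_pos a j k (a' * q ^ L) hpos
      have hpoint : a' * q ^ (L + 2 * ((k:ℤ) - s)) = a * q ^ (2*k) := by
        rw [zpow_add, ← mul_assoc, hc, mul_assoc, ← zpow_natCast q (2*s), ← zpow_add,
          ← zpow_natCast q (2*k)]
        congr 1
        push_cast
        ring
      have := hmax (L + 2 * ((k:ℤ) - s)) (by
        have : (s : ℤ) < k := by exact_mod_cast lt_of_lt_of_le hsj (le_of_lt hjk)
        omega)
      rw [hpoint, hneg] at this
      exact absurd this (by norm_num)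
  · intro hD
    have := hD (a * q ^ (2*k))
    rw [hmval, eval_neg hq a j k hjk] at this
    omega
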